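/- Let f : P → Q be a map of posets, T a superlinear family of translations on Q, and C a cocomplete category. Then the pushforward functor f_* is an isometry onto its image for the weak interleaving distances: for all P-modules M, N : P → C, d_P(M,N) = d_Q(f_*M, f_*N), where d_P is the weak relative interleaving distance on P-modules and d_Q is the weak interleaving distance on Q-modules (both valued in [0,∞]). -/

import Mathlib

open CategoryTheory Limits NNReal ENNReal

universe v u

/-- A superlinear family of translations on a poset `Q`. -/
structure SuperlinearFamily (Q : Type v) [PartialOrder Q] where
  trans : ℝ≥0 → Q →o Q
  le_self : ∀ (ε : ℝ≥0) (q : Q), q ≤ trans ε q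
  superlinear : ∀ (ε₁ ε₂ : ℝ≥0) (q : Q), trans ε₂ (trans ε₁ q) ≤ trans (ε₁ + ε₂) q

namespace SuperlinearFamily

variable {Q : Type v} [PartialOrder Q] (T : SuperlinearFamily Q)

lemma trans_mono_eps {ε ε' : ℝ≥0} (h : ε ≤ ε') (q : Q) : T.trans ε q ≤ T.trans ε' q :=
  calc T.trans ε q ≤ T.trans (ε' - ε) (T.trans ε q) := T.le_self _ _
    _ ≤ T.trans (ε + (ε' - ε)) q := T.superlinear _ _ _
    _ = T.trans ε' q := by rw [add_tsub_cancel_of_le h]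

variable {C : Type u} [Category.{v} C]

/-- The `ε`-shift `(M)^ε = M ∘ T_ε` of a `Q`-module. -/
def shift (ε : ℝ≥0) (M : Q ⥤ C) : Q ⥤ C := (T.trans ε).monotone.functor ⋙ M

/-- η^ε : M ⟶ (M)^ε. -/
def eta (ε : ℝ≥0) (M : Q ⥤ C) : M ⟶ T.shift ε M where
  app q := M.map (homOfLE (T.le_self ε q))
  naturality a b u := by
    dsimp [shift, Monotone.functor]
    rw [← M.map_comp, ← M.map_comp]
    exact congrArg M.map (Subsingleton.elim _ _)

/-- η^{ε,ε'} : (M)^ε ⟶ (M)^{ε'} for ε ≤ ε'. -/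
def etaLE {ε ε' : ℝ≥0} (h : ε ≤ ε') (M : Q ⥤ C) : T.shift ε M ⟶ T.shift ε' M where
  app q := M.map (homOfLE (T.trans_mono_eps h q))
  naturality a b u := by
    dsimp [shift, Monotone.functor]
    rw [← M.map_comp, ← M.map_comp]
    exact congrArg M.map (Subsingleton.elim _ _)

/-- Σ^{ε,ε} : ((M)^ε)^ε ⟶ (M)^{2ε}. -/
def sigma (ε : ℝ≥0) (M : Q ⥤ C) : T.shift ε (T.shift ε M) ⟶ T.shift (2 * ε) M where
  app q := M.map (homOfLE (show T.trans ε (T.trans ε q) ≤ T.trans (2 * ε) q by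
    rw [two_mul]; exact T.superlinear ε ε q))
  naturality a b u := by
    dsimp [shift, Monotone.functor]
    rw [← M.map_comp, ← M.map_comp]
    exact congrArg M.map (Subsingleton.elim _ _)

/-- The shift of a natural transformation: (ψ)^ε := T_ε^* ψ. -/
def shiftHom (ε : ℝ≥0) {M N : Q ⥤ C} (ψ : M ⟶ N) : T.shift ε M ⟶ T.shift ε N :=
  Functor.whiskerLeft (T.trans ε).monotone.functor ψ

/-- A weak ε-interleaving of `Q`-modules `M` and `N`. -/
def WeakInterleaving (ε : ℝ≥0) (M N : Q ⥤ C) : Prop :=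
  ∃ (φ : M ⟶ T.shift ε N) (ψ : N ⟶ T.shift ε M),
    φ ≫ T.shiftHom ε ψ ≫ T.sigma ε M = T.eta 0 M ≫ T.etaLE zero_le M ∧
    ψ ≫ T.shiftHom ε φ ≫ T.sigma ε N = T.eta 0 N ≫ T.etaLE zero_le N

/-- The weak interleaving distance between two `Q`-modules, valued in `[0,∞]`. -/
noncomputable def weakDist (M N : Q ⥤ C) : ℝ≥0∞ :=
  ⨅ ε : {ε : ℝ≥0 // T.WeakInterleaving ε M N}, (ε : ℝ≥0∞)

end SuperlinearFamily

namespace SuperlinearFamily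

variable {P : Type v} [PartialOrder P] {Q : Type v} [PartialOrder Q]
variable (T : SuperlinearFamily Q)
variable {C : Type u} [Category.{v} C] [HasColimits C]

/-- The ε-shift of a `P`-module relative to `f : P → Q`, i.e. `f^* T_ε^* f_* M`. -/
noncomputable def relShift (f : P →o Q) (ε : ℝ≥0) (M : P ⥤ C) : P ⥤ C :=
  f.monotone.functor ⋙ T.shift ε (f.monotone.functor.lan.obj M)

/-- η_P^0 : M ⟶ (M)_P^0, built from the unit of `f_* ⊣ f^*` and η^0 over `Q`. -/
noncomputable def relEtaZero (f : P →o Q) (M : P ⥤ C) : M ⟶ T.relShift f 0 M :=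
  f.monotone.functor.lanUnit.app M ≫
    Functor.whiskerLeft f.monotone.functor (T.eta 0 (f.monotone.functor.lan.obj M))

/-- η_P^{0,2ε} : (M)_P^0 ⟶ (M)_P^{2ε}. -/
noncomputable def relEtaLE (f : P →o Q) (ε : ℝ≥0) (M : P ⥤ C) :
    T.relShift f 0 M ⟶ T.relShift f (2 * ε) M :=
  Functor.whiskerLeft f.monotone.functor (T.etaLE zero_le (f.monotone.functor.lan.obj M))

/-- Σ_P^{ε,ε} : ((M)_P^ε)_P^ε ⟶ (M)_P^{2ε}, the composite of `f^* T_ε^* χ T_ε^* f_*`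
with `f^* Σ^{ε,ε} f_*`. -/
noncomputable def relSigma (f : P →o Q) (ε : ℝ≥0) (M : P ⥤ C) :
    T.relShift f ε (T.relShift f ε M) ⟶ T.relShift f (2 * ε) M :=
  Functor.whiskerLeft f.monotone.functor
      (Functor.whiskerLeft (T.trans ε).monotone.functor
        ((f.monotone.functor.lanAdjunction C).counit.app
          (T.shift ε (f.monotone.functor.lan.obj M)))) ≫
    Functor.whiskerLeft f.monotone.functor (T.sigma ε (f.monotone.functor.lan.obj M))

/-- The relative shift of a natural transformation, `(ψ)_P^ε := f^* T_ε^* f_* ψ`. -/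
noncomputable def relShiftHom (f : P →o Q) (ε : ℝ≥0) {N M : P ⥤ C} (ψ : N ⟶ M) :
    T.relShift f ε N ⟶ T.relShift f ε M :=
  Functor.whiskerLeft f.monotone.functor
    (Functor.whiskerLeft (T.trans ε).monotone.functor (f.monotone.functor.lan.map ψ))

/-- A weak ε-interleaving of `P`-modules `M` and `N` relative to `f : P → Q`. -/
def RelWeakInterleaving (f : P →o Q) (ε : ℝ≥0) (M N : P ⥤ C) : Prop :=
  ∃ (φ : M ⟶ T.relShift f ε N) (ψ : N ⟶ T.relShift f ε M),
    φ ≫ T.relShiftHom f ε ψ ≫ T.relSigma f ε M = T.relEtaZero f M ≫ T.relEtaLE f ε M ∧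
    ψ ≫ T.relShiftHom f ε φ ≫ T.relSigma f ε N = T.relEtaZero f N ≫ T.relEtaLE f ε N

/-- The weak relative interleaving distance between two `P`-modules, valued in `[0,∞]`. -/
noncomputable def relWeakDist (f : P →o Q) (M N : P ⥤ C) : ℝ≥0∞ :=
  ⨅ ε : {ε : ℝ≥0 // T.RelWeakInterleaving f ε M N}, (ε : ℝ≥0∞)

end SuperlinearFamily


namespace SuperlinearFamily

variable {P : Type v} [PartialOrder P] {Q : Type v} [PartialOrder Q]
variable (T : SuperlinearFamily Q)
variable {C : Type u} [Category.{v} C] [HasColimits C]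
variable (f : P →o Q)

lemma transpose_comp (ε : ℝ≥0) (M N : P ⥤ C)
    (φ : M ⟶ T.relShift f ε N) (ψ : N ⟶ T.relShift f ε M) :
    ((f.monotone.functor.lanAdjunction C).homEquiv M
        (T.shift (2 * ε) (f.monotone.functor.lan.obj M))).symm
      (φ ≫ T.relShiftHom f ε ψ ≫ T.relSigma f ε M) =
    ((f.monotone.functor.lanAdjunction C).homEquiv M
        (T.shift ε (f.monotone.functor.lan.obj N))).symm φ ≫
      T.shiftHom ε (((f.monotone.functor.lanAdjunction C).homEquiv N
        (T.shift ε (f.monotone.functor.lan.obj M))).symm ψ) ≫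
      T.sigma ε (f.monotone.functor.lan.obj M) := by
  have h : T.relShiftHom f ε ψ ≫ T.relSigma f ε M =
      ((Functor.whiskeringLeft P Q C).obj f.monotone.functor).map
        (T.shiftHom ε (((f.monotone.functor.lanAdjunction C).homEquiv N
            (T.shift ε (f.monotone.functor.lan.obj M))).symm ψ) ≫
          T.sigma ε (f.monotone.functor.lan.obj M)) := by
    simp only [relShiftHom, relSigma, shiftHom, Adjunction.homEquiv_counit,
      Functor.whiskerLeft_comp, Functor.whiskeringLeft_obj_map, Category.assoc]
    erw [Adjunction.homEquiv_counit, Functor.whiskerLeft_comp, Functor.whiskerLeft_comp,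
      Functor.whiskerLeft_comp]
    exact (Category.assoc _ _ _).symm
  erw [h, Adjunction.homEquiv_naturality_right_symm]

lemma transpose_eta (ε : ℝ≥0) (M : P ⥤ C) :
    ((f.monotone.functor.lanAdjunction C).homEquiv M
        (T.shift (2 * ε) (f.monotone.functor.lan.obj M))).symm
      (T.relEtaZero f M ≫ T.relEtaLE f ε M) =
    T.eta 0 (f.monotone.functor.lan.obj M) ≫
      T.etaLE zero_le (f.monotone.functor.lan.obj M) := by
  have h : T.relEtaZero f M ≫ T.relEtaLE f ε M =
      (f.monotone.functor.lanAdjunction C).unit.app M ≫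
        ((Functor.whiskeringLeft P Q C).obj f.monotone.functor).map
          (T.eta 0 (f.monotone.functor.lan.obj M) ≫
            T.etaLE zero_le (f.monotone.functor.lan.obj M)) := by
    simp only [relEtaZero, relEtaLE, Functor.lanAdjunction_unit, Functor.whiskerLeft_comp,
      Functor.whiskeringLeft_obj_map, Category.assoc]
    exact Category.assoc _ _ _
  erw [h, Equiv.symm_apply_eq, Adjunction.homEquiv_unit]

lemma relWeakInterleaving_iff (ε : ℝ≥0) (M N : P ⥤ C) :
    T.RelWeakInterleaving f ε M N ↔
      T.WeakInterleaving ε (f.monotone.functor.lan.obj M) (f.monotone.functor.lan.obj N) := by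
  constructor
  · rintro ⟨φ, ψ, h1, h2⟩
    refine ⟨((f.monotone.functor.lanAdjunction C).homEquiv M _).symm φ,
      ((f.monotone.functor.lanAdjunction C).homEquiv N _).symm ψ, ?_, ?_⟩
    · erw [← T.transpose_comp f ε M N φ ψ, h1, T.transpose_eta f ε M]
    · erw [← T.transpose_comp f ε N M ψ φ, h2, T.transpose_eta f ε N]
  · rintro ⟨φ', ψ', h1, h2⟩
    refine ⟨(f.monotone.functor.lanAdjunction C).homEquiv M _ φ',
      (f.monotone.functor.lanAdjunction C).homEquiv N _ ψ', ?_, ?_⟩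
    · apply (((f.monotone.functor.lanAdjunction C).homEquiv M _).symm).injective
      erw [T.transpose_comp f ε M N, T.transpose_eta f ε M,
        Equiv.symm_apply_apply, Equiv.symm_apply_apply, h1]
    · apply (((f.monotone.functor.lanAdjunction C).homEquiv N _).symm).injective
      erw [T.transpose_comp f ε N M, T.transpose_eta f ε N,
        Equiv.symm_apply_apply, Equiv.symm_apply_apply, h2]

end SuperlinearFamily

/-- The pushforward functor `f_*` is an isometry onto its image: for all `P`-modules
`M`, `N`, the weak relative interleaving distance over `P` equals the weak interleaving
distance over `Q` between the pushforwards. -/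
theorem pushforward_isometry {P Q : Type v} [PartialOrder P] [PartialOrder Q]
    {C : Type u} [Category.{v} C] [HasColimits C]
    (T : SuperlinearFamily Q) (f : P →o Q) (M N : P ⥤ C) :
    T.relWeakDist f M N =
      T.weakDist (f.monotone.functor.lan.obj M) (f.monotone.functor.lan.obj N) := by
  apply le_antisymm
  · exact le_iInf fun e => iInf_le_of_le
      ⟨e.1, (T.relWeakInterleaving_iff f e.1 M N).mpr e.2⟩ le_rfl
  · exact le_iInf fun e => iInf_le_of_le
      ⟨e.1, (T.relWeakInterleaving_iff f e.1 M N).mp e.2⟩ le_rfl
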